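/- Let N ≥ 3, K ≥ 0, M ≥ 1 with N = K + 2M, and let J̃ be the canonical Lie–Darboux Poisson matrix with M canonical pairs and K zero (Casimir) directions. Suppose there exists a totally antisymmetric real tensor λ_{ijk} (i,j,k ∈ {1,…,N}) satisfying the algebraic condition λ_{nij}λ_{mkp} + λ_{njk}λ_{mip} + λ_{nki}λ_{mjp} + λ_{mij}λ_{nkp} + λ_{mjk}λ_{nip} + λ_{mki}λ_{njp} = 0 for all indices, and such that λ_{ijN} = J̃_{ij} for all i,j. Then M = 1; equivalently, a tri-linear Nambu bracket generating this Poisson structure can exist only when N = K + 2. -/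
import Mathlib


/-- let `N = K + 2M ≥ 3` with `M ≥ 1`, and let `J̃` be the canonical
Lie–Darboux Poisson matrix with `M` canonical pairs and `K` Casimir directions. If there
is a totally antisymmetric real tensor `λ_{ijk}` satisfying the algebraic condition from
the fundamental identity and generating `J̃` through its last slot, `λ_{ijN} = J̃_{ij}`,
then `M = 1`, i.e. `N = K + 2`. -/
theorem statement10 (N M K : ℕ) (hN : 3 ≤ N) (hM : 1 ≤ M) (hNK : N = K + 2 * M)
    (lam : Fin N → Fin N → Fin N → ℝ)
    (hanti : ∀ i j k : Fin N,
      lam i j k = - lam j i k ∧ lam i j k = - lam i k j ∧ lam i j k = - lam k j i)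
    (halg : ∀ i j k m n p : Fin N,
      lam n i j * lam m k p + lam n j k * lam m i p + lam n k i * lam m j p
        + lam m i j * lam n k p + lam m j k * lam n i p + lam m k i * lam n j p = 0)
    (hgen : ∀ i j : Fin N, lam i j ⟨N - 1, by omega⟩
      = (if i.1 < M ∧ j.1 = i.1 + M then (1 : ℝ)
          else if j.1 < M ∧ i.1 = j.1 + M then -1
          else 0)) :
    M = 1 := by
  by_contra hc
  have hM2 : 2 ≤ M := by omega
  rcases Nat.eq_zero_or_pos K with hK | hK
  · -- K = 0 : then N - 1 = 2M - 1 pairs with M - 1, contradicting antisymmetry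
    have h1 := hgen ⟨M - 1, by omega⟩ ⟨N - 1, by omega⟩
    simp only [Fin.val_mk] at h1
    rw [if_pos ⟨by omega, by omega⟩] at h1
    have h2 := (hanti ⟨M - 1, by omega⟩ ⟨N - 1, by omega⟩ ⟨N - 1, by omega⟩).2.1
    rw [h1] at h2
    norm_num at h2
  · -- K ≥ 1 : last index N-1 is a Casimir direction; two slots set to it reduce
    -- the algebraic identity to a Plücker-type relation on J̃, which fails for M ≥ 2.
    have h := halg ⟨1, by omega⟩ ⟨M, by omega⟩ ⟨N - 1, by omega⟩ ⟨N - 1, by omega⟩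
      ⟨0, by omega⟩ ⟨M + 1, by omega⟩
    have h1 : lam ⟨N - 1, by omega⟩ ⟨N - 1, by omega⟩ ⟨M + 1, by omega⟩ = 0 := by
      have := (hanti ⟨N - 1, by omega⟩ ⟨N - 1, by omega⟩ ⟨M + 1, by omega⟩).1; linarith
    have h2 : lam ⟨N - 1, by omega⟩ ⟨M, by omega⟩ ⟨N - 1, by omega⟩ = 0 := by
      have := (hanti ⟨N - 1, by omega⟩ ⟨M, by omega⟩ ⟨N - 1, by omega⟩).2.2; linarith
    have h3 : lam ⟨N - 1, by omega⟩ ⟨N - 1, by omega⟩ ⟨1, by omega⟩ = 0 := by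
      have := (hanti ⟨N - 1, by omega⟩ ⟨N - 1, by omega⟩ ⟨1, by omega⟩).1; linarith
    have h4 : lam ⟨0, by omega⟩ ⟨M, by omega⟩ ⟨N - 1, by omega⟩ = 1 := by
      have hg := hgen ⟨0, by omega⟩ ⟨M, by omega⟩
      simp only [Fin.val_mk] at hg
      rw [if_pos ⟨by omega, by omega⟩] at hg
      exact hg
    have h5 : lam ⟨N - 1, by omega⟩ ⟨1, by omega⟩ ⟨M + 1, by omega⟩ = 1 := by
      have hsw := (hanti ⟨N - 1, by omega⟩ ⟨1, by omega⟩ ⟨M + 1, by omega⟩).2.2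
      have hg := hgen ⟨M + 1, by omega⟩ ⟨1, by omega⟩
      simp only [Fin.val_mk] at hg
      rw [if_neg (by omega), if_pos ⟨by omega, by omega⟩] at hg
      rw [hg] at hsw
      linarith
    have h6 : lam ⟨0, by omega⟩ ⟨N - 1, by omega⟩ ⟨1, by omega⟩ = 0 := by
      have hsw := (hanti ⟨0, by omega⟩ ⟨N - 1, by omega⟩ ⟨1, by omega⟩).2.1
      have hg := hgen ⟨0, by omega⟩ ⟨1, by omega⟩
      simp only [Fin.val_mk] at hg
      rw [if_neg (by omega), if_neg (by omega)] at hg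
      rw [hg] at hsw
      linarith
    have h7 : lam ⟨0, by omega⟩ ⟨N - 1, by omega⟩ ⟨M + 1, by omega⟩ = 0 := by
      have hsw := (hanti ⟨0, by omega⟩ ⟨N - 1, by omega⟩ ⟨M + 1, by omega⟩).2.1
      have hg := hgen ⟨0, by omega⟩ ⟨M + 1, by omega⟩
      simp only [Fin.val_mk] at hg
      rw [if_neg (by omega), if_neg (by omega)] at hg
      rw [hg] at hsw
      linarith
    rw [h1, h2, h3, h4, h5, h6, h7] at h
    simp only [mul_zero, zero_mul, mul_one, one_mul, add_zero, zero_add] at h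
    norm_num at h
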